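/- arXiv:2205.12620 — 4 statements merged into one kernel-verified Lean document; each statement's English description precedes it below -/
import Mathlib

section
/- Let 0 < r < R. Define u : EuclideanSpace ℝ (Fin 3) → ℝ by u(x) = r(R − ‖x‖) / (‖x‖(R − r)). Then u is twice continuously differentiable on the open spherical shell Ω = {x : r < ‖x‖ < R} and harmonic there (Δu = 0 on Ω); u(x) = 1 whenever ‖x‖ = r; u(x) = 0 whenever ‖x‖ = R; and at every point x with ‖x‖ = R the derivative of u in the outward radial direction equals −r/(R(R − r)), i.e. fderiv ℝ u x (R⁻¹ • x) = −r/(R(R − r)). Consequently, with λ = −r/(R(R − r)), the shell Ω together with u solves the exterior Bernoulli problem with fixed boundary the sphere of radius r. -/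
section Helpers
open Real
variable {E : Type*} [NormedAddCommGroup E] [InnerProductSpace ℝ E]

lemma hasFDerivAt_norm' {x : E} (hx : x ≠ 0) :
    HasFDerivAt (fun y : E => ‖y‖) (‖x‖⁻¹ • innerSL ℝ x) x := by
  have hn : (0:ℝ) < ‖x‖ := norm_pos_iff.2 hx
  have h0 : (0:ℝ) < ‖x‖ ^ 2 := by positivity
  have h := (Real.hasDerivAt_sqrt h0.ne').comp_hasFDerivAt x
    (hasStrictFDerivAt_norm_sq x).hasFDerivAt
  have h2 : HasFDerivAt (fun y : E => ‖y‖)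
      ((1 / (2 * Real.sqrt (‖x‖ ^ 2))) • 2 • (innerSL ℝ) x) x := by
    simpa [Function.comp_def, Real.sqrt_sq, norm_nonneg] using h
  convert h2 using 1
  rw [Real.sqrt_sq (norm_nonneg x)]
  ext v
  simp [two_smul]
  ring

lemma hasFDerivAt_inv_norm {x : E} (hx : x ≠ 0) :
    HasFDerivAt (fun y : E => ‖y‖⁻¹) ((-(‖x‖ ^ 3)⁻¹) • innerSL ℝ x) x := by
  have hn : ‖x‖ ≠ 0 := norm_ne_zero_iff.2 hx
  have h := (hasDerivAt_inv hn).comp_hasFDerivAt x (hasFDerivAt_norm' hx)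
  refine h.congr_fderiv ?_; symm
  rw [smul_smul]
  congr 1
  field_simp

lemma hasFDerivAt_u {r R : ℝ} (hRr : R - r ≠ 0) {x : E} (hx : x ≠ 0) :
    HasFDerivAt (fun y : E => r * (R - ‖y‖) / (‖y‖ * (R - r)))
      ((-(r * R / (R - r)) * (‖x‖ ^ 3)⁻¹) • innerSL ℝ x) x := by
  have hn : ‖x‖ ≠ 0 := norm_ne_zero_iff.2 hx
  have h := ((hasFDerivAt_inv_norm hx).const_mul (r * R / (R - r))).add_const (-(r / (R - r)))
  have h2 : HasFDerivAt (fun y : E => r * R / (R - r) * ‖y‖⁻¹ + -(r / (R - r)))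
      ((-(r * R / (R - r)) * (‖x‖ ^ 3)⁻¹) • innerSL ℝ x) x := by
    refine h.congr_fderiv ?_; symm
    rw [smul_smul]; congr 1; ring
  apply h2.congr_of_eventuallyEq
  filter_upwards [isOpen_compl_singleton.mem_nhds hx] with y hy
  have hny : ‖y‖ ≠ 0 := norm_ne_zero_iff.2 hy
  field_simp
  ring

lemma fderiv_u_apply {r R : ℝ} (hRr : R - r ≠ 0) {x : E} (hx : x ≠ 0) (v : E) :
    fderiv ℝ (fun y : E => r * (R - ‖y‖) / (‖y‖ * (R - r))) x v
      = -(r * R / (R - r)) * (‖x‖ ^ 3)⁻¹ * inner ℝ x v := by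
  rw [(hasFDerivAt_u hRr hx).fderiv]
  simp [mul_assoc]

lemma fderiv_fderiv_u {r R : ℝ} (hRr : R - r ≠ 0) {x : E} (hx : x ≠ 0) (e e' : E) :
    fderiv ℝ (fun y : E => fderiv ℝ (fun z : E => r * (R - ‖z‖) / (‖z‖ * (R - r))) y e) x e'
      = -(r * R / (R - r)) *
        ((‖x‖ ^ 3)⁻¹ * inner ℝ e e' - 3 * (‖x‖ ^ 5)⁻¹ * (inner ℝ x e : ℝ) * inner ℝ x e') := by
  set a : ℝ := r * R / (R - r) with ha
  have hn : ‖x‖ ≠ 0 := norm_ne_zero_iff.2 hx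
  have h_ev : (fun y : E => fderiv ℝ (fun z : E => r * (R - ‖z‖) / (‖z‖ * (R - r))) y e)
      =ᶠ[nhds x] (fun y : E => -a * ((‖y‖ ^ 3)⁻¹ * inner ℝ y e)) := by
    filter_upwards [isOpen_compl_singleton.mem_nhds hx] with y hy
    rw [fderiv_u_apply hRr hy]
    ring
  rw [h_ev.fderiv_eq]
  have hp : HasFDerivAt (fun y : E => (‖y‖ ^ 3)⁻¹)
      ((-3 * (‖x‖ ^ 5)⁻¹) • innerSL ℝ x) x := by
    have h := (hasDerivAt_pow 3 (‖x‖⁻¹)).comp_hasFDerivAt x (hasFDerivAt_inv_norm hx)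
    have h2 : HasFDerivAt (fun y : E => (‖y‖ ^ 3)⁻¹)
        ((↑3 * ‖x‖⁻¹ ^ (3 - 1)) • (-(‖x‖ ^ 3)⁻¹) • innerSL ℝ x) x := by
      simpa [Function.comp_def, ← inv_pow] using h
    convert h2 using 1
    rw [smul_smul]; congr 1; rw [← inv_pow, ← inv_pow]; norm_num; ring
  have hq : HasFDerivAt (fun y : E => (inner ℝ y e : ℝ)) (innerSL ℝ e) x := by
    apply ((innerSL ℝ e).hasFDerivAt (x := x)).congr_of_eventuallyEq
    filter_upwards with y
    simp [real_inner_comm]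
  have h : HasFDerivAt (fun y : E => -a * ((‖y‖ ^ 3)⁻¹ * inner ℝ y e)) _ x :=
    (hp.mul hq).const_mul (-a)
  rw [h.fderiv]
  simp [mul_comm, mul_assoc, mul_left_comm]
  ring

end Helpers

/-- The Laplacian: sum of second directional derivatives along the standard
orthonormal basis of `EuclideanSpace ℝ (Fin d)`. -/
noncomputable def laplacian {d : ℕ} (u : EuclideanSpace ℝ (Fin d) → ℝ)
    (x : EuclideanSpace ℝ (Fin d)) : ℝ :=
  ∑ i, fderiv ℝ (fun y => fderiv ℝ u y (EuclideanSpace.single i 1)) x (EuclideanSpace.single i 1)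

/-- The spherical shell `r < ‖x‖ < R` with `u x = r(R − ‖x‖)/(‖x‖(R − r))` solves the exterior
Bernoulli problem in dimension 3 with `λ = −r/(R(R − r))`. -/
theorem exterior_bernoulli_shell_3d (r R : ℝ) (hr : 0 < r) (hrR : r < R) :
    ContDiffOn ℝ 2 (fun x : EuclideanSpace ℝ (Fin 3) => r * (R - ‖x‖) / (‖x‖ * (R - r)))
      {x : EuclideanSpace ℝ (Fin 3) | r < ‖x‖ ∧ ‖x‖ < R} ∧
    (∀ x : EuclideanSpace ℝ (Fin 3), r < ‖x‖ → ‖x‖ < R →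
      laplacian (fun x => r * (R - ‖x‖) / (‖x‖ * (R - r))) x = 0) ∧
    (∀ x : EuclideanSpace ℝ (Fin 3), ‖x‖ = r →
      r * (R - ‖x‖) / (‖x‖ * (R - r)) = 1) ∧
    (∀ x : EuclideanSpace ℝ (Fin 3), ‖x‖ = R →
      r * (R - ‖x‖) / (‖x‖ * (R - r)) = 0) ∧
    (∀ x : EuclideanSpace ℝ (Fin 3), ‖x‖ = R →
      fderiv ℝ (fun x : EuclideanSpace ℝ (Fin 3) => r * (R - ‖x‖) / (‖x‖ * (R - r))) x
        (R⁻¹ • x) = -r / (R * (R - r))) := by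

  have hR : (0:ℝ) < R := hr.trans hrR
  have hRr : R - r ≠ 0 := sub_ne_zero.2 hrR.ne'
  refine ⟨?_, ?_, ?_, ?_, ?_⟩
  · -- smoothness
    intro x hx
    obtain ⟨hx1, hx2⟩ := hx
    have hx0 : x ≠ 0 := by
      intro h; rw [h, norm_zero] at hx1; exact absurd hx1 (not_lt.2 hr.le)
    have hn : ContDiffAt ℝ 2 (fun y : EuclideanSpace ℝ (Fin 3) => ‖y‖) x :=
      contDiffAt_norm ℝ hx0
    have hne : ‖x‖ * (R - r) ≠ 0 :=
      mul_ne_zero (norm_ne_zero_iff.2 hx0) hRr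
    exact ((contDiffAt_const.mul (contDiffAt_const.sub hn)).div
      (hn.mul contDiffAt_const) hne).contDiffWithinAt
  · -- harmonic
    intro x hx1 hx2
    have hx0 : x ≠ 0 := by
      intro h; rw [h, norm_zero] at hx1; exact absurd hx1 (not_lt.2 hr.le)
    have hn : ‖x‖ ≠ 0 := norm_ne_zero_iff.2 hx0
    unfold laplacian
    have hterm : ∀ i : Fin 3,
        fderiv ℝ (fun y => fderiv ℝ
            (fun z : EuclideanSpace ℝ (Fin 3) => r * (R - ‖z‖) / (‖z‖ * (R - r))) y
            (EuclideanSpace.single i 1)) x (EuclideanSpace.single i 1)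
        = -(r * R / (R - r)) * ((‖x‖ ^ 3)⁻¹ - 3 * (‖x‖ ^ 5)⁻¹ * (x i) ^ 2) := by
      intro i
      rw [fderiv_fderiv_u hRr hx0]
      have h1 : (inner ℝ (EuclideanSpace.single i (1:ℝ)) (EuclideanSpace.single i (1:ℝ)) : ℝ) = 1 := by
        simp [EuclideanSpace.inner_single_left, EuclideanSpace.single_apply]
      have h2 : (inner ℝ x (EuclideanSpace.single i (1:ℝ)) : ℝ) = x i := by
        simp [EuclideanSpace.inner_single_right]
      rw [h1, h2]; ring
    simp only [hterm]
    have hs : ∑ i, (x i) ^ 2 = ‖x‖ ^ 2 := by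
      rw [EuclideanSpace.norm_eq, Real.sq_sqrt (by positivity)]
      simp [Real.norm_eq_abs, sq_abs]
    have hsplit : ∀ i : Fin 3, -(r * R / (R - r)) * ((‖x‖ ^ 3)⁻¹ - 3 * (‖x‖ ^ 5)⁻¹ * x i ^ 2)
        = -(r * R / (R - r)) * (‖x‖ ^ 3)⁻¹ + 3 * (r * R / (R - r)) * (‖x‖ ^ 5)⁻¹ * x i ^ 2 :=
      fun i => by ring
    simp only [hsplit]
    rw [Finset.sum_add_distrib, Finset.sum_const, ← Finset.mul_sum, hs]
    simp only [Finset.card_univ, Fintype.card_fin, nsmul_eq_mul, Nat.cast_ofNat]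
    field_simp
    ring
  · intro x hx
    rw [hx]; field_simp
  · intro x hx
    rw [hx]; simp
  · intro x hx
    have hx0 : x ≠ 0 := by
      intro h; rw [h, norm_zero] at hx; exact absurd hx.symm hR.ne'
    rw [fderiv_u_apply hRr hx0, real_inner_smul_right, real_inner_self_eq_norm_sq, hx]
    field_simp
end

section
/- Let d ≥ 1, let M : ℝ → Matrix (Fin d) (Fin d) ℝ satisfy M(0) = 1 (the identity matrix) and HasDerivAt M B 0 for some matrix B, and let n ∈ EuclideanSpace ℝ (Fin d) with ‖n‖ = 1. Then the map t ↦ det(M(t)) · ‖(M(t)⁻¹)ᵀ.mulVec n‖ (Euclidean norm) has derivative trace(B) − ⟪B.mulVec n, n⟫ at t = 0, where ⟪·,·⟫ is the Euclidean inner product. -/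
open Matrix
open scoped RealInnerProductSpace

/-- Derivative of the determinant along a path through the identity. -/
lemma entry_hasDerivAt_det {d : ℕ} {M : ℝ → Matrix (Fin d) (Fin d) ℝ}
    {B : Matrix (Fin d) (Fin d) ℝ} (hM0 : M 0 = 1)
    (h : ∀ i j, HasDerivAt (fun t => M t i j) (B i j) 0) :
    HasDerivAt (fun t => (M t).det) B.trace 0 := by
  classical
  have key : HasDerivAt
      (fun t => ∑ σ : Equiv.Perm (Fin d), ((Equiv.Perm.sign σ : ℤ) : ℝ) * ∏ i, M t (σ i) i)
      (∑ σ : Equiv.Perm (Fin d), ((Equiv.Perm.sign σ : ℤ) : ℝ) *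
        ∑ i, (∏ j ∈ Finset.univ.erase i, M 0 (σ j) j) * B (σ i) i) 0 := by
    refine HasDerivAt.fun_sum fun σ _ => HasDerivAt.const_mul _ ?_
    simpa [smul_eq_mul] using HasDerivAt.fun_finsetProd (fun i (_ : i ∈ Finset.univ) => h (σ i) i)
  have hval : (∑ σ : Equiv.Perm (Fin d), ((Equiv.Perm.sign σ : ℤ) : ℝ) *
      ∑ i, (∏ j ∈ Finset.univ.erase i, M 0 (σ j) j) * B (σ i) i) = B.trace := by
    rw [Finset.sum_eq_single (1 : Equiv.Perm (Fin d))]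
    · simp [hM0, Matrix.trace, Matrix.diag, Matrix.one_apply_eq]
    · intro σ _ hσ
      have hz : ∀ i : Fin d, (∏ j ∈ Finset.univ.erase i, M 0 (σ j) j) = 0 := by
        intro i
        obtain ⟨a, ha⟩ : ∃ a, σ a ≠ a := by
          by_contra h'
          push_neg at h'
          exact hσ (Equiv.ext h')
        obtain ⟨k, hk, hks⟩ : ∃ k, k ≠ i ∧ σ k ≠ k := by
          by_cases hai : a = i
          · subst hai
            exact ⟨σ a, ha, fun h'' => ha (σ.injective h'')⟩
          · exact ⟨a, hai, ha⟩
        refine Finset.prod_eq_zero (Finset.mem_erase.mpr ⟨hk, Finset.mem_univ k⟩) ?_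
        rw [hM0]
        exact Matrix.one_apply_ne hks
      simp [hz]
    · simp
  have h2 : HasDerivAt (fun t => (M t).det)
      (∑ σ : Equiv.Perm (Fin d), ((Equiv.Perm.sign σ : ℤ) : ℝ) *
        ∑ i, (∏ j ∈ Finset.univ.erase i, M 0 (σ j) j) * B (σ i) i) 0 := by
    simp only [Matrix.det_apply']
    exact key
  rw [← hval]
  exact h2

section LinftyAux

attribute [local instance] Matrix.linftyOpNormedRing Matrix.linftyOpNormedAlgebra

/-- Entrywise derivative of the matrix inverse along a path through the identity. -/
lemma entry_hasDerivAt_inv {d : ℕ} {M : ℝ → Matrix (Fin d) (Fin d) ℝ}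
    {B : Matrix (Fin d) (Fin d) ℝ} (hM0 : M 0 = 1)
    (h : ∀ i j, HasDerivAt (fun t => M t i j) (B i j) 0) (i j : Fin d) :
    HasDerivAt (fun t => (M t)⁻¹ i j) (-(B i j)) 0 := by
  classical
  haveI : CompleteSpace (Matrix (Fin d) (Fin d) ℝ) := FiniteDimensional.complete ℝ _
  have hMd : HasDerivAt M B 0 := by
    have hrw : ∀ A : Matrix (Fin d) (Fin d) ℝ,
        A = ∑ p : Fin d × Fin d, A p.1 p.2 • Matrix.single p.1 p.2 (1 : ℝ) := by
      intro A
      ext k l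
      simp [Matrix.sum_apply, Matrix.single, ite_and, Finset.sum_ite_eq, Finset.sum_ite_eq',
        Fintype.sum_prod_type]
    have hsum : HasDerivAt
        (fun t => ∑ p : Fin d × Fin d, M t p.1 p.2 • Matrix.single p.1 p.2 (1 : ℝ))
        (∑ p : Fin d × Fin d, B p.1 p.2 • Matrix.single p.1 p.2 (1 : ℝ)) 0 :=
      HasDerivAt.fun_sum fun p _ => (h p.1 p.2).smul_const _
    have hfun : M = fun t =>
        ∑ p : Fin d × Fin d, M t p.1 p.2 • Matrix.single p.1 p.2 (1 : ℝ) :=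
      funext fun t => hrw (M t)
    rw [hfun]
    rw [hrw B]
    exact hsum
  have hinv : HasDerivAt (fun t => Ring.inverse (M t)) (-B) 0 := by
    have hx := hasFDerivAt_ringInverse (𝕜 := ℝ) (R := Matrix (Fin d) (Fin d) ℝ) 1
    simp only [Units.val_one, inv_one] at hx
    rw [← hM0] at hx
    have := hx.comp_hasDerivAt 0 hMd
    simp [hM0] at this
    exact this
  have hinv' : HasDerivAt (fun t => (M t)⁻¹) (-B) 0 := by
    simpa only [← Matrix.nonsing_inv_eq_ringInverse] using hinv
  let l : Matrix (Fin d) (Fin d) ℝ →ₗ[ℝ] ℝ :=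
    { toFun := fun A => A i j, map_add' := fun _ _ => rfl, map_smul' := fun _ _ => rfl }
  have hc := (LinearMap.toContinuousLinearMap l).hasFDerivAt.comp_hasDerivAt 0 hinv'
  exact hc

end LinftyAux

attribute [local instance] Matrix.normedAddCommGroup Matrix.normedSpace

/-- Derivative at the identity of the transported boundary Jacobian
`t ↦ det(M t) · ‖(M t)⁻ᵀ n‖` (Euclidean norm), for a unit vector `n`: if `M 0 = 1` and `M` has
derivative `B` at `t = 0`, the derivative is `trace B − ⟪B n, n⟫`. -/
theorem hasDerivAt_boundary_jacobian (d : ℕ) (hd : 1 ≤ d)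
    (M : ℝ → Matrix (Fin d) (Fin d) ℝ) (B : Matrix (Fin d) (Fin d) ℝ)
    (hM0 : M 0 = 1) (hM : HasDerivAt M B 0)
    (n : EuclideanSpace ℝ (Fin d)) (hn : ‖n‖ = 1) :
    HasDerivAt
      (fun t => (M t).det *
        ‖(WithLp.equiv 2 (Fin d → ℝ)).symm
          ((((M t)⁻¹)ᵀ).mulVec ((WithLp.equiv 2 (Fin d → ℝ)) n))‖)
      (B.trace -
        ⟪(WithLp.equiv 2 (Fin d → ℝ)).symm (B.mulVec ((WithLp.equiv 2 (Fin d → ℝ)) n)), n⟫)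
      0 := by
  classical
  have hentry : ∀ i j, HasDerivAt (fun t => M t i j) (B i j) 0 := by
    intro i j
    let l : Matrix (Fin d) (Fin d) ℝ →ₗ[ℝ] ℝ :=
      { toFun := fun A => A i j, map_add' := fun _ _ => rfl, map_smul' := fun _ _ => rfl }
    have hc := (LinearMap.toContinuousLinearMap l).hasFDerivAt.comp_hasDerivAt 0 hM
    exact hc
  have hdet := entry_hasDerivAt_det hM0 hentry
  have hinv := fun i j => entry_hasDerivAt_inv hM0 hentry i j
  set n' : Fin d → ℝ := (WithLp.equiv 2 (Fin d → ℝ)) n with hn'def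
  set w : ℝ → Fin d → ℝ := fun t i => ∑ j, (M t)⁻¹ j i * n' j with hwdef
  have hw0 : ∀ i, w 0 i = n' i := by
    intro i
    simp [hwdef, hM0, Matrix.one_apply, Finset.sum_ite_eq]
  have hw : ∀ i, HasDerivAt (fun t => w t i) (-∑ j, B j i * n' j) 0 := by
    intro i
    have := HasDerivAt.fun_sum (u := Finset.univ) fun j (_ : j ∈ Finset.univ) =>
      (hinv j i).mul_const (n' j)
    simpa [hwdef, neg_mul, Finset.sum_neg_distrib] using this
  have hs : HasDerivAt (fun t => ∑ i, w t i ^ 2)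
      (∑ i, (2 : ℝ) * w 0 i ^ 1 * (-∑ j, B j i * n' j)) 0 :=
    HasDerivAt.fun_sum fun i _ => by have h := (hw i).pow 2; norm_num at h ⊢; exact h
  have hs0 : (∑ i, w 0 i ^ 2) = 1 := by
    have h1 : Real.sqrt (∑ i, ‖n i‖ ^ 2) = 1 := by rw [← EuclideanSpace.norm_eq]; exact hn
    have h2 : (∑ i, ‖n i‖ ^ 2) = 1 := Real.sqrt_eq_one.mp h1
    calc (∑ i, w 0 i ^ 2) = ∑ i, ‖n i‖ ^ 2 := by
          refine Finset.sum_congr rfl fun i _ => ?_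
          rw [hw0 i]
          simp [Real.norm_eq_abs, sq_abs, hn'def]
      _ = 1 := h2
  have hg : HasDerivAt (fun t => Real.sqrt (∑ i, w t i ^ 2))
      ((1 / (2 * Real.sqrt (∑ i, w 0 i ^ 2))) *
        (∑ i, (2 : ℝ) * w 0 i ^ 1 * (-∑ j, B j i * n' j))) 0 :=
    (Real.hasDerivAt_sqrt (by rw [hs0]; norm_num)).comp 0 hs
  have hF := hdet.mul hg
  have hfun : (fun t => (M t).det *
        ‖(WithLp.equiv 2 (Fin d → ℝ)).symm ((((M t)⁻¹)ᵀ).mulVec n')‖)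
      = fun t => (M t).det * Real.sqrt (∑ i, w t i ^ 2) := by
    funext t
    congr 1
    rw [EuclideanSpace.norm_eq]
    congr 1
    refine Finset.sum_congr rfl fun i _ => ?_
    simp [hwdef, Matrix.mulVec, dotProduct, Matrix.transpose_apply, Real.norm_eq_abs,
      sq_abs, WithLp.equiv_symm_apply]
  have hval : B.trace - ⟪(WithLp.equiv 2 (Fin d → ℝ)).symm (B.mulVec n'), n⟫
      = B.trace * Real.sqrt (∑ i, w 0 i ^ 2) + (M 0).det *
        ((1 / (2 * Real.sqrt (∑ i, w 0 i ^ 2))) *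
          (∑ i, (2 : ℝ) * w 0 i ^ 1 * (-∑ j, B j i * n' j))) := by
    rw [hs0, hM0]
    have hinner : ⟪(WithLp.equiv 2 (Fin d → ℝ)).symm (B.mulVec n'), n⟫
        = ∑ i, (∑ j, B i j * n' j) * n' i := by
      rw [PiLp.inner_apply]
      refine Finset.sum_congr rfl fun i _ => ?_
      simp [Matrix.mulVec, dotProduct, RCLike.inner_apply, conj_trivial,
        WithLp.equiv_symm_apply, hn'def, mul_comm]
    rw [hinner]
    have hswap : ∑ i, (∑ j, B i j * n' j) * n' i = ∑ i, n' i * ∑ j, B j i * n' j := by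
      simp_rw [Finset.sum_mul, Finset.mul_sum]
      rw [Finset.sum_comm]
      exact Finset.sum_congr rfl fun _ _ => Finset.sum_congr rfl fun _ _ => by ring
    rw [hswap]
    simp only [Real.sqrt_one, Matrix.det_one, pow_one, mul_neg]
    rw [Finset.sum_neg_distrib]
    simp only [hw0]
    have h2S : ∑ x, 2 * n' x * ∑ j, B j x * n' j = 2 * ∑ x, n' x * ∑ j, B j x * n' j := by
      rw [Finset.mul_sum]
      exact Finset.sum_congr rfl fun _ _ => by ring
    rw [h2S]
    ring
  rw [hfun, hval]
  exact hF
end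

section
/- Let E be a real normed vector space, Ω ⊆ E open, x ∈ frontier Ω, and v ∈ E such that x − t • v ∈ Ω for all sufficiently small t > 0. Let u₁, u₂ : E → ℝ be differentiable at x, suppose u₂ = 0 on the closure of Ω, and suppose the coupled Robin conditions hold at x: fderiv ℝ u₁ x v − u₂(x) = λ and u₁(x) + fderiv ℝ u₂ x v = 0, for some λ ∈ ℝ. Then u₁(x) = 0 and fderiv ℝ u₁ x v = λ; that is, the overdetermined Bernoulli boundary conditions hold at x. -/
/-- If the imaginary part `u₂` of the CCBM solution vanishes on the closure of `Ω`, then at a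
free-boundary point `x` (with `−v` pointing into `Ω`) the coupled Robin conditions
`∂_v u₁ − u₂ = λ` and `u₁ + ∂_v u₂ = 0` imply the overdetermined Bernoulli conditions
`u₁ = 0` and `∂_v u₁ = λ` at `x`. -/
theorem ccbm_recovers_bernoulli_conditions {E : Type*} [NormedAddCommGroup E]
    [NormedSpace ℝ E] (Ω : Set E) (hΩ : IsOpen Ω) (x : E) (hx : x ∈ frontier Ω) (v : E)
    (hv : ∃ ε > 0, ∀ t : ℝ, 0 < t → t < ε → x - t • v ∈ Ω)
    (u₁ u₂ : E → ℝ) (h₁ : DifferentiableAt ℝ u₁ x) (h₂ : DifferentiableAt ℝ u₂ x)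
    (hzero : ∀ y ∈ closure Ω, u₂ y = 0) (lam : ℝ)
    (hrobin₁ : fderiv ℝ u₁ x v - u₂ x = lam)
    (hrobin₂ : u₁ x + fderiv ℝ u₂ x v = 0) :
    u₁ x = 0 ∧ fderiv ℝ u₁ x v = lam := by
  obtain ⟨ε, hε, hmem⟩ := hv
  have hxcl : x ∈ closure Ω := hx.1
  have hu₂x : u₂ x = 0 := hzero x hxcl
  -- directional derivative of u₂ along -v vanishes
  have hinner : HasDerivAt (fun t : ℝ => x - t • v) (-v) 0 := by
    simpa using ((hasDerivAt_id (0 : ℝ)).smul_const v).const_sub x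
  have hg : HasDerivAt (fun t : ℝ => u₂ (x - t • v)) (fderiv ℝ u₂ x (-v)) 0 := by
    have hx0 : x - (0:ℝ) • v = x := by simp
    have h₂' : HasFDerivAt u₂ (fderiv ℝ u₂ x) (x - (0:ℝ) • v) := by rw [hx0]; exact h₂.hasFDerivAt
    exact h₂'.comp_hasDerivAt 0 hinner
  have hgW : HasDerivWithinAt (fun t : ℝ => u₂ (x - t • v)) (fderiv ℝ u₂ x (-v))
      (Set.Ici 0) 0 := hg.hasDerivWithinAt
  have heq : (fun t : ℝ => u₂ (x - t • v)) =ᶠ[nhdsWithin 0 (Set.Ici 0)]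
      (fun _ => (0 : ℝ)) := by
    filter_upwards [Ico_mem_nhdsGE hε]
      with t ht
    rcases eq_or_lt_of_le ht.1 with h | h
    · simp [← h, hu₂x]
    · exact hzero _ (subset_closure (hmem t h ht.2))
  have hgW' : HasDerivWithinAt (fun t : ℝ => u₂ (x - t • v)) 0 (Set.Ici 0) 0 := by
    have h0 : HasDerivWithinAt (fun _ : ℝ => (0 : ℝ)) 0 (Set.Ici 0) 0 :=
      (hasDerivWithinAt_const 0 _ 0)
    exact h0.congr_of_eventuallyEq heq (by simpa using hu₂x)
  have huniq : fderiv ℝ u₂ x (-v) = 0 := by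
    have := hgW.derivWithin (uniqueDiffOn_Ici 0 0 Set.self_mem_Ici)
    rw [hgW'.derivWithin (uniqueDiffOn_Ici 0 0 Set.self_mem_Ici)] at this
    exact this.symm
  have hdv : fderiv ℝ u₂ x v = 0 := by
    have := huniq
    rw [map_neg] at this
    linarith
  constructor
  · linarith [hrobin₂]
  · linarith [hrobin₁]
end

section
/- Let d ≥ 1, let φ, ψ : EuclideanSpace ℝ (Fin d) → ℝ be twice continuously differentiable, and let V : EuclideanSpace ℝ (Fin d) → EuclideanSpace ℝ (Fin d) be continuously differentiable. Then at every point the following pointwise identity holds: (div V)(∇φ·∇ψ) − (DV(∇φ))·∇ψ − ∇φ·(DV(∇ψ)) = (Δφ)(V·∇ψ) + (Δψ)(V·∇φ) + div((∇φ·∇ψ)V − (V·∇ψ)∇φ − (V·∇φ)∇ψ), where ∇ denotes the gradient, · the Euclidean inner product, DV(w) the Fréchet derivative of V applied to the vector w, div W the trace of the Fréchet derivative of a vector field W, and Δ the Laplacian. -/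
open scoped RealInnerProductSpace

/-- The divergence of a vector field: the trace of its Fréchet derivative, computed along the
standard orthonormal basis. -/
noncomputable def diverg {d : ℕ}
    (W : EuclideanSpace ℝ (Fin d) → EuclideanSpace ℝ (Fin d))
    (x : EuclideanSpace ℝ (Fin d)) : ℝ :=
  ∑ i, ⟪fderiv ℝ W x (EuclideanSpace.single i 1), EuclideanSpace.single i 1⟫

section Helpers

variable {d : ℕ}

local notation "E" => EuclideanSpace ℝ (Fin d)

lemma inner_grad (f : E → ℝ) (x v : E) : ⟪gradient f x, v⟫ = fderiv ℝ f x v := by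
  rw [gradient]; exact InnerProductSpace.toDual_symm_apply

lemma grad_contDiff {f : E → ℝ} (hf : ContDiff ℝ 2 f) : ContDiff ℝ 1 (gradient f) :=
  ((InnerProductSpace.toDual ℝ _).symm.contDiff).comp (hf.fderiv_right (m := 1) (by norm_num))

lemma fderiv_apply_const {f : E → ℝ} (hf : ContDiff ℝ 2 f) (x v w : E) :
    fderiv ℝ (fun y => fderiv ℝ f y w) x v = fderiv ℝ (fderiv ℝ f) x v w := by
  have hd : DifferentiableAt ℝ (fderiv ℝ f) x :=
    ((hf.fderiv_right (m := 1) (by norm_num)).differentiable one_ne_zero) x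
  rw [fderiv_clm_apply hd (differentiableAt_const w)]
  simp

lemma hess_eq {f : E → ℝ} (hf : ContDiff ℝ 2 f) (x v w : E) :
    ⟪fderiv ℝ (gradient f) x v, w⟫ = fderiv ℝ (fderiv ℝ f) x v w := by
  have h1 : fderiv ℝ (fun y => ⟪gradient f y, w⟫) x v
      = ⟪gradient f x, (0:E)⟫ + ⟪fderiv ℝ (gradient f) x v, w⟫ := by
    have := fderiv_inner_apply (𝕜 := ℝ)
      (((grad_contDiff hf).differentiable one_ne_zero) x) (differentiableAt_const w) v
    simpa using this
  have h2 : (fun y => ⟪gradient f y, w⟫) = fun y => fderiv ℝ f y w := by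
    funext y; exact inner_grad f y w
  have h3 := fderiv_apply_const hf x v w
  rw [h2] at h1
  rw [h1] at h3
  simpa using h3

lemma lap_eq {f : E → ℝ} (hf : ContDiff ℝ 2 f) (x : E) :
    laplacian f x
      = ∑ i, fderiv ℝ (fderiv ℝ f) x (EuclideanSpace.single i 1) (EuclideanSpace.single i 1) := by
  unfold laplacian
  exact Finset.sum_congr rfl fun i _ => fderiv_apply_const hf x _ _

lemma clm_expand (L : E →L[ℝ] ℝ) (v : E) :
    L v = ∑ i, L (EuclideanSpace.single i 1) * v i := by
  conv_lhs => rw [← OrthonormalBasis.sum_repr (EuclideanSpace.basisFun (Fin d) ℝ) v]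
  rw [map_sum]
  refine Finset.sum_congr rfl fun i _ => ?_
  rw [EuclideanSpace.basisFun_repr, EuclideanSpace.basisFun_apply, map_smul]
  simp [mul_comm]

lemma inner_single (v : E) (i : Fin d) : ⟪v, EuclideanSpace.single i 1⟫ = v i := by
  have := EuclideanSpace.inner_single_right (𝕜 := ℝ) i 1 v
  simp only [RCLike.star_def, map_one, one_mul] at this ⊢
  simpa using this

end Helpers

/-- The pointwise divergence-form identity underlying the domain-integral formula of the
shape-gradient computation:
`(div V)(∇φ·∇ψ) − (DV ∇φ)·∇ψ − ∇φ·(DV ∇ψ)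
  = Δφ (V·∇ψ) + Δψ (V·∇φ) + div((∇φ·∇ψ)V − (V·∇ψ)∇φ − (V·∇φ)∇ψ)`. -/
theorem pointwise_divergence_identity (d : ℕ) (hd : 1 ≤ d)
    (φ ψ : EuclideanSpace ℝ (Fin d) → ℝ)
    (V : EuclideanSpace ℝ (Fin d) → EuclideanSpace ℝ (Fin d))
    (hφ : ContDiff ℝ 2 φ) (hψ : ContDiff ℝ 2 ψ) (hV : ContDiff ℝ 1 V) :
    ∀ x : EuclideanSpace ℝ (Fin d),
      diverg V x * ⟪gradient φ x, gradient ψ x⟫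
        - ⟪fderiv ℝ V x (gradient φ x), gradient ψ x⟫
        - ⟪gradient φ x, fderiv ℝ V x (gradient ψ x)⟫
      = laplacian φ x * ⟪V x, gradient ψ x⟫
        + laplacian ψ x * ⟪V x, gradient φ x⟫
        + diverg (fun y =>
            ⟪gradient φ y, gradient ψ y⟫ • V y
            - ⟪V y, gradient ψ y⟫ • gradient φ y
            - ⟪V y, gradient φ y⟫ • gradient ψ y) x := by
  intro x
  classical
  set e : Fin d → EuclideanSpace ℝ (Fin d) := fun i => EuclideanSpace.single i 1 with he
  have dV : DifferentiableAt ℝ V x := (hV.differentiable one_ne_zero) x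
  have dGφ : DifferentiableAt ℝ (gradient φ) x := ((grad_contDiff hφ).differentiable one_ne_zero) x
  have dGψ : DifferentiableAt ℝ (gradient ψ) x := ((grad_contDiff hψ).differentiable one_ne_zero) x
  have dF : DifferentiableAt ℝ (fun y => ⟪gradient φ y, gradient ψ y⟫) x := dGφ.inner ℝ dGψ
  have dg : DifferentiableAt ℝ (fun y => ⟪V y, gradient ψ y⟫) x := dV.inner ℝ dGψ
  have dh : DifferentiableAt ℝ (fun y => ⟪V y, gradient φ y⟫) x := dV.inner ℝ dGφ
  -- product rule for scalar • vector, tested against basis vector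
  have key : ∀ (c : EuclideanSpace ℝ (Fin d) → ℝ)
      (Z : EuclideanSpace ℝ (Fin d) → EuclideanSpace ℝ (Fin d)),
      DifferentiableAt ℝ c x → DifferentiableAt ℝ Z x → ∀ i : Fin d,
      ⟪fderiv ℝ (fun y => c y • Z y) x (e i), e i⟫
        = fderiv ℝ c x (e i) * ⟪Z x, e i⟫ + c x * ⟪fderiv ℝ Z x (e i), e i⟫ := by
    intro c Z hc hZ i
    rw [fderiv_fun_smul hc hZ]
    simp only [ContinuousLinearMap.add_apply, ContinuousLinearMap.coe_smul',
      Pi.smul_apply, ContinuousLinearMap.smulRight_apply, inner_add_left,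
      real_inner_smul_left]
    ring
  have hfd : fderiv ℝ (fun y =>
        ⟪gradient φ y, gradient ψ y⟫ • V y
        - ⟪V y, gradient ψ y⟫ • gradient φ y
        - ⟪V y, gradient φ y⟫ • gradient ψ y) x
      = fderiv ℝ (fun y => ⟪gradient φ y, gradient ψ y⟫ • V y) x
        - fderiv ℝ (fun y => ⟪V y, gradient ψ y⟫ • gradient φ y) x
        - fderiv ℝ (fun y => ⟪V y, gradient φ y⟫ • gradient ψ y) x := by
    rw [fderiv_fun_sub (f := fun y => ⟪gradient φ y, gradient ψ y⟫ • V y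
        - ⟪V y, gradient ψ y⟫ • gradient φ y) (g := fun y => ⟪V y, gradient φ y⟫ • gradient ψ y)
        ((dF.smul dV).sub (dg.smul dGφ)) (dh.smul dGψ),
      fderiv_fun_sub (f := fun y => ⟪gradient φ y, gradient ψ y⟫ • V y)
        (g := fun y => ⟪V y, gradient ψ y⟫ • gradient φ y) (dF.smul dV) (dg.smul dGφ)]
  have hterm : ∀ i : Fin d,
      ⟪fderiv ℝ (fun y =>
        ⟪gradient φ y, gradient ψ y⟫ • V y
        - ⟪V y, gradient ψ y⟫ • gradient φ y
        - ⟪V y, gradient φ y⟫ • gradient ψ y) x (e i), e i⟫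
      = (fderiv ℝ (fun y => ⟪gradient φ y, gradient ψ y⟫) x (e i) * ⟪V x, e i⟫
          + ⟪gradient φ x, gradient ψ x⟫ * ⟪fderiv ℝ V x (e i), e i⟫)
        - (fderiv ℝ (fun y => ⟪V y, gradient ψ y⟫) x (e i) * ⟪gradient φ x, e i⟫
          + ⟪V x, gradient ψ x⟫ * ⟪fderiv ℝ (gradient φ) x (e i), e i⟫)
        - (fderiv ℝ (fun y => ⟪V y, gradient φ y⟫) x (e i) * ⟪gradient ψ x, e i⟫
          + ⟪V x, gradient φ x⟫ * ⟪fderiv ℝ (gradient ψ) x (e i), e i⟫) := by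
    intro i
    rw [hfd]
    simp only [ContinuousLinearMap.sub_apply, inner_sub_left]
    rw [key _ _ dF dV i, key _ _ dg dGφ i, key _ _ dh dGψ i]
  -- the divergence of the combination field
  have hdiv : diverg (fun y =>
        ⟪gradient φ y, gradient ψ y⟫ • V y
        - ⟪V y, gradient ψ y⟫ • gradient φ y
        - ⟪V y, gradient φ y⟫ • gradient ψ y) x
      = fderiv ℝ (fun y => ⟪gradient φ y, gradient ψ y⟫) x (V x)
          + ⟪gradient φ x, gradient ψ x⟫ * diverg V x
        - fderiv ℝ (fun y => ⟪V y, gradient ψ y⟫) x (gradient φ x)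
        - ⟪V x, gradient ψ x⟫ * laplacian φ x
        - fderiv ℝ (fun y => ⟪V y, gradient φ y⟫) x (gradient ψ x)
        - ⟪V x, gradient φ x⟫ * laplacian ψ x := by
    have hdef : diverg (fun y =>
        ⟪gradient φ y, gradient ψ y⟫ • V y
        - ⟪V y, gradient ψ y⟫ • gradient φ y
        - ⟪V y, gradient φ y⟫ • gradient ψ y) x
      = ∑ i, ⟪fderiv ℝ (fun y =>
        ⟪gradient φ y, gradient ψ y⟫ • V y
        - ⟪V y, gradient ψ y⟫ • gradient φ y
        - ⟪V y, gradient φ y⟫ • gradient ψ y) x (e i), e i⟫ := rfl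
    have hdV : diverg V x = ∑ i, ⟪fderiv ℝ V x (e i), e i⟫ := rfl
    rw [hdef, Finset.sum_congr rfl fun i _ => hterm i, hdV]
    rw [Finset.sum_sub_distrib, Finset.sum_sub_distrib, Finset.sum_add_distrib,
      Finset.sum_add_distrib, Finset.sum_add_distrib]
    have e1 : ∀ (L : EuclideanSpace ℝ (Fin d) →L[ℝ] ℝ) (v : EuclideanSpace ℝ (Fin d)),
        ∑ i, L (e i) * ⟪v, e i⟫ = L v := by
      intro L v
      rw [clm_expand L v]
      exact Finset.sum_congr rfl fun i _ => by rw [inner_single]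
    have e2 : ∑ i, ⟪gradient φ x, gradient ψ x⟫ * ⟪fderiv ℝ V x (e i), e i⟫
        = ⟪gradient φ x, gradient ψ x⟫ * ∑ i, ⟪fderiv ℝ V x (e i), e i⟫ := by
      rw [Finset.mul_sum]
    have e3 : ∑ i, ⟪V x, gradient ψ x⟫ * ⟪fderiv ℝ (gradient φ) x (e i), e i⟫
        = ⟪V x, gradient ψ x⟫ * laplacian φ x := by
      rw [lap_eq hφ, Finset.mul_sum]
      exact Finset.sum_congr rfl fun i _ => by rw [hess_eq hφ]
    have e4 : ∑ i, ⟪V x, gradient φ x⟫ * ⟪fderiv ℝ (gradient ψ) x (e i), e i⟫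
        = ⟪V x, gradient φ x⟫ * laplacian ψ x := by
      rw [lap_eq hψ, Finset.mul_sum]
      exact Finset.sum_congr rfl fun i _ => by rw [hess_eq hψ]
    rw [e1, e1, e1, e2, e3, e4]
    ring
  -- expand the three directional derivatives of the scalar products
  have symφ : IsSymmSndFDerivAt ℝ φ x := hφ.contDiffAt.isSymmSndFDerivAt (by simp)
  have symψ : IsSymmSndFDerivAt ℝ ψ x := hψ.contDiffAt.isSymmSndFDerivAt (by simp)
  have hF : fderiv ℝ (fun y => ⟪gradient φ y, gradient ψ y⟫) x (V x)
      = fderiv ℝ (fderiv ℝ ψ) x (gradient φ x) (V x)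
        + fderiv ℝ (fderiv ℝ φ) x (gradient ψ x) (V x) := by
    rw [fderiv_inner_apply (𝕜 := ℝ) dGφ dGψ (V x)]
    rw [real_inner_comm (fderiv ℝ (gradient ψ) x (V x)) (gradient φ x), hess_eq hψ, hess_eq hφ,
      symψ.eq (V x) (gradient φ x), symφ.eq (V x) (gradient ψ x)]
  have hg2 : fderiv ℝ (fun y => ⟪V y, gradient ψ y⟫) x (gradient φ x)
      = fderiv ℝ (fderiv ℝ ψ) x (gradient φ x) (V x)
        + ⟪fderiv ℝ V x (gradient φ x), gradient ψ x⟫ := by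
    rw [fderiv_inner_apply (𝕜 := ℝ) dV dGψ (gradient φ x)]
    rw [real_inner_comm (fderiv ℝ (gradient ψ) x (gradient φ x)) (V x), hess_eq hψ]
  have hh2 : fderiv ℝ (fun y => ⟪V y, gradient φ y⟫) x (gradient ψ x)
      = fderiv ℝ (fderiv ℝ φ) x (gradient ψ x) (V x)
        + ⟪gradient φ x, fderiv ℝ V x (gradient ψ x)⟫ := by
    rw [fderiv_inner_apply (𝕜 := ℝ) dV dGφ (gradient ψ x)]
    rw [real_inner_comm (fderiv ℝ (gradient φ) x (gradient ψ x)) (V x), hess_eq hφ,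
      real_inner_comm (fderiv ℝ V x (gradient ψ x)) (gradient φ x)]
  rw [hdiv, hF, hg2, hh2]
  ring
end
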